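/- Assume √K·(Û_{2n,K} − E[L_{n_t−1}])/σ̂_n →_D N(0,1), that (√K·(E[L_{n_t−1}] − L*))/σ̂_n → a ∈ ℝ under the alternative, that σ̂_n ≤ 1, √K/n_t → ∞, and L* < 1/2. Then the test rejecting when √K(Û_{2n,K} − 1/2)/σ̂_n < Φ^{-1}(α) has asymptotic level α under the null (where E[L_{n_t−1}] = L* = 1/2) and its power converges to 1 under the alternative. -/

import Mathlib

open MeasureTheory ProbabilityTheory Filter
open scoped Topology NNReal ENNReal

/-- The standard normal cumulative distribution function `Φ`. -/
noncomputable def stdNormalCDF (x : ℝ) : ℝ :=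
  ((gaussianReal 0 1) (Set.Iic x)).toReal

namespace UStatAux

noncomputable def arctanBCF : BoundedContinuousFunction ℝ ℝ :=
  BoundedContinuousFunction.ofNormedAddCommGroup (fun x => Real.arctan x + Real.pi)
    (by continuity) (2 * Real.pi)
    (fun x => by
      have h1 := Real.arctan_lt_pi_div_two x
      have h2 := Real.neg_pi_div_two_lt_arctan x
      have hπ := Real.pi_pos
      rw [Real.norm_eq_abs, abs_le]
      refine ⟨show -(2 * Real.pi) ≤ Real.arctan x + Real.pi by nlinarith,
        show Real.arctan x + Real.pi ≤ 2 * Real.pi by nlinarith⟩)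

lemma arctanBCF_apply (x : ℝ) : arctanBCF x = Real.arctan x + Real.pi := rfl

instance : NullSingletonClass (gaussianReal 0 1) :=
  nullSingletonClass_gaussianReal one_ne_zero

lemma eventually_aemeasurable {Ω : Type*} [MeasurableSpace Ω] (μ : Measure Ω)
    [IsProbabilityMeasure μ] (X : ℕ → Ω → ℝ)
    (hCLT : ∀ f : BoundedContinuousFunction ℝ ℝ,
      Tendsto (fun n => ∫ ω, f (X n ω) ∂μ) atTop (𝓝 (∫ x, f x ∂(gaussianReal 0 1)))) :
    ∀ᶠ n in atTop, AEMeasurable (X n) μ := by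
  have hπ := Real.pi_pos
  have hlim : (0:ℝ) < ∫ x, arctanBCF x ∂(gaussianReal 0 1) := by
    have hint : Integrable (fun x => arctanBCF x) (gaussianReal 0 1) :=
      arctanBCF.integrable _
    have hmono : ∀ x : ℝ, Real.pi / 2 ≤ arctanBCF x := fun x => by
      have := Real.neg_pi_div_two_lt_arctan x
      rw [arctanBCF_apply]; linarith
    have h0 : ∫ _ : ℝ, (Real.pi / 2) ∂(gaussianReal 0 1) = Real.pi / 2 := by simp
    have h1 : Real.pi / 2 ≤ ∫ x, arctanBCF x ∂(gaussianReal 0 1) := by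
      calc Real.pi / 2 = ∫ _ : ℝ, (Real.pi / 2) ∂(gaussianReal 0 1) := h0.symm
        _ ≤ ∫ x, arctanBCF x ∂(gaussianReal 0 1) :=
          integral_mono (integrable_const _) hint hmono
    linarith
  filter_upwards [(hCLT arctanBCF).eventually (eventually_gt_nhds hlim)] with n hn
  have hInt : Integrable (fun ω => arctanBCF (X n ω)) μ := by
    by_contra h
    rw [integral_undef h] at hn
    exact lt_irrefl 0 hn
  have h1 : AEMeasurable (fun ω => Real.arctan (X n ω)) μ := by
    have h2 : (fun ω => Real.arctan (X n ω))
        = fun ω => (arctanBCF (X n ω)) - Real.pi := by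
      funext ω; rw [arctanBCF_apply]; ring
    rw [h2]
    exact hInt.aemeasurable.sub aemeasurable_const
  have htan : Measurable Real.tan := by
    have h : Real.tan = fun x => Real.sin x / Real.cos x := funext Real.tan_eq_sin_div_cos
    rw [h]
    exact Real.continuous_sin.measurable.div Real.continuous_cos.measurable
  have hX : X n = fun ω => Real.tan (Real.arctan (X n ω)) := by
    funext ω; rw [Real.tan_arctan]
  rw [hX]
  exact htan.comp_aemeasurable h1

lemma tendsto_cdf {Ω : Type*} [MeasurableSpace Ω] (μ : Measure Ω)
    [IsProbabilityMeasure μ] (X : ℕ → Ω → ℝ)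
    (hCLT : ∀ f : BoundedContinuousFunction ℝ ℝ,
      Tendsto (fun n => ∫ ω, f (X n ω) ∂μ) atTop (𝓝 (∫ x, f x ∂(gaussianReal 0 1))))
    (t : ℝ) :
    Tendsto (fun n => (μ {ω | X n ω < t}).toReal) atTop (𝓝 (stdNormalCDF t)) := by
  classical
  have hmeas := eventually_aemeasurable μ X hCLT
  set γP : ProbabilityMeasure ℝ := ⟨gaussianReal 0 1, inferInstance⟩ with hγP
  set ν : ℕ → ProbabilityMeasure ℝ := fun n =>
    if h : AEMeasurable (X n) μ then ⟨μ.map (X n), Measure.isProbabilityMeasure_map h⟩ else γP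
    with hν
  have hνcoe : ∀ n, AEMeasurable (X n) μ → (ν n : Measure ℝ) = μ.map (X n) := by
    intro n hn
    simp only [hν, dif_pos hn]
    exact congrArg Subtype.val (dif_pos hn)
  have hconv : Tendsto ν atTop (𝓝 γP) := by
    rw [MeasureTheory.ProbabilityMeasure.tendsto_iff_forall_integral_tendsto]
    intro f
    apply Tendsto.congr' _ (hCLT f)
    filter_upwards [hmeas] with n hn
    rw [hνcoe n hn, integral_map hn f.continuous.aestronglyMeasurable]
  have hγcoe : (γP : Measure ℝ) = gaussianReal 0 1 := rfl
  have hfront : γP (frontier (Set.Iio t)) = 0 := by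
    have h0 : (γP : Measure ℝ) (frontier (Set.Iio t)) = 0 := by
      rw [hγcoe, frontier_Iio]
      exact measure_singleton t
    have h1 := MeasureTheory.ProbabilityMeasure.ennreal_coeFn_eq_coeFn_toMeasure γP
      (frontier (Set.Iio t))
    rw [h0] at h1
    exact_mod_cast h1
  have hport := MeasureTheory.ProbabilityMeasure.tendsto_measure_of_null_frontier_of_tendsto
    hconv hfront
  have hreal : Tendsto (fun n => ((ν n (Set.Iio t) : ℝ≥0) : ℝ)) atTop
      (𝓝 ((γP (Set.Iio t) : ℝ≥0) : ℝ)) := NNReal.tendsto_coe.2 hport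
  have hcoe_real : ∀ (P : ProbabilityMeasure ℝ) (s : Set ℝ),
      ((P s : ℝ≥0) : ℝ) = ((P : Measure ℝ) s).toReal := by
    intro P s
    rw [show ((P s : ℝ≥0) : ℝ) = ((P s : ℝ≥0) : ℝ≥0∞).toReal from (ENNReal.coe_toReal _).symm,
      MeasureTheory.ProbabilityMeasure.ennreal_coeFn_eq_coeFn_toMeasure]
  have hlimit : ((γP (Set.Iio t) : ℝ≥0) : ℝ) = stdNormalCDF t := by
    rw [hcoe_real]
    rw [hγcoe]
    unfold stdNormalCDF
    congr 1
    exact measure_congr MeasureTheory.Iio_ae_eq_Iic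
  rw [← hlimit]
  apply Tendsto.congr' _ hreal
  filter_upwards [hmeas] with n hn
  rw [hcoe_real, hνcoe n hn,
    Measure.map_apply_of_aemeasurable hn measurableSet_Iio]
  rfl

end UStatAux

/-- For the U-statistic test: assume the standardized statistic
`√K (Û_{2n,K} − E[L_{n_t−1}])/σ̂` is asymptotically `N(0,1)`, `σ̂ ≤ 1` and
`√K / n_t → ∞`. Then the test rejecting when `√K (Û_{2n,K} − 1/2)/σ̂ < Φ⁻¹(α)` has
asymptotic level `α` under the null (where `E[L_{n_t−1}] = L* = 1/2`), and if under the
alternative `√K (E[L_{n_t−1}] − L*)/σ̂ → a ∈ ℝ` (in probability) with `L* < 1/2`, its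
power converges to 1. -/
theorem ustat_test_level_and_power
    {Ω : Type*} [MeasurableSpace Ω] (μ : Measure Ω) [IsProbabilityMeasure μ]
    (K nt : ℕ → ℕ) (U : ℕ → Ω → ℝ) (σh : ℕ → Ω → ℝ) (EL : ℕ → ℝ) (Lstar : ℝ)
    (α qα : ℝ) (hα0 : 0 < α) (hα1 : α < 1) (hq : stdNormalCDF qα = α)
    (hσpos : ∀ n ω, 0 < σh n ω) (hσbd : ∀ n ω, σh n ω ≤ 1)
    (hrate : Tendsto (fun n => Real.sqrt (K n) / (nt n : ℝ)) atTop atTop)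
    (hCLT : ∀ f : BoundedContinuousFunction ℝ ℝ,
      Tendsto (fun n => ∫ ω, f (Real.sqrt (K n) * (U n ω - EL n) / σh n ω) ∂μ)
        atTop (𝓝 (∫ x, f x ∂(gaussianReal 0 1)))) :
    ((∀ n, EL n = 1/2) → Lstar = 1/2 →
      Tendsto (fun n =>
          (μ {ω | Real.sqrt (K n) * (U n ω - 1/2) / σh n ω < qα}).toReal)
        atTop (𝓝 α)) ∧
    (∀ a : ℝ, Lstar < 1/2 →
      (∀ δ : ℝ, 0 < δ →
        Tendsto (fun n =>
            μ {ω | |Real.sqrt (K n) * (EL n - Lstar) / σh n ω - a| > δ})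
          atTop (𝓝 0)) →
      Tendsto (fun n =>
          (μ {ω | Real.sqrt (K n) * (U n ω - 1/2) / σh n ω < qα}).toReal)
        atTop (𝓝 1)) := by
  have hcdf := UStatAux.tendsto_cdf μ
    (fun n ω => Real.sqrt (K n) * (U n ω - EL n) / σh n ω) hCLT
  constructor
  · -- level under the null
    intro hEL _
    have := hcdf qα
    simp only [hEL] at this
    rwa [hq] at this
  · -- power under the alternative
    intro a hL hprob
    -- √K → ∞
    have hsqrt : Tendsto (fun n => Real.sqrt (K n)) atTop atTop := by
      rw [tendsto_atTop]
      intro b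
      filter_upwards [hrate.eventually (eventually_ge_atTop (max b 1))] with n hn
      by_cases h0 : (nt n : ℝ) = 0
      · exfalso
        rw [h0, div_zero] at hn
        have := le_max_right b 1
        linarith
      · have h1 : (1:ℝ) ≤ (nt n : ℝ) := by
          exact_mod_cast Nat.one_le_iff_ne_zero.mpr (Nat.cast_ne_zero.mp h0)
        have h2 : Real.sqrt (K n) = (Real.sqrt (K n) / (nt n : ℝ)) * (nt n : ℝ) :=
          (div_mul_cancel₀ _ h0).symm
        rw [h2]
        have hb1 : b ≤ max b 1 := le_max_left b 1
        have h1' : (1:ℝ) ≤ max b 1 := le_max_right b 1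
        nlinarith
    have hc : Tendsto (fun n => Real.sqrt (K n) * (Lstar - 1/2)) atTop atBot :=
      hsqrt.atTop_mul_const_of_neg (by linarith)
    rw [tendsto_order]
    constructor
    · -- for every c < 1, eventually c < p n
      intro c hc1
      -- choose M with stdNormalCDF M > c
      have hΦ : Tendsto stdNormalCDF atTop (𝓝 1) := by
        have h0 : Tendsto (fun x => (gaussianReal 0 1) (Set.Iic x)) atTop
            (𝓝 ((gaussianReal 0 1) Set.univ)) := tendsto_measure_Iic_atTop _
        have h1 : Tendsto (fun x => ((gaussianReal 0 1) (Set.Iic x)).toReal) atTop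
            (𝓝 ((gaussianReal 0 1) Set.univ).toReal) :=
          (ENNReal.tendsto_toReal (measure_ne_top _ _)).comp h0
        simp only [measure_univ, ENNReal.toReal_one] at h1
        exact h1
      obtain ⟨M, hM⟩ : ∃ M : ℝ, c < stdNormalCDF M := by
        have := (hΦ.eventually (eventually_gt_nhds hc1)).exists
        exact this
      set d := stdNormalCDF M with hd
      set ε := (d - c) / 3 with hε
      have hεpos : 0 < ε := by rw [hε]; linarith
      have E1 := (hcdf M).eventually (eventually_gt_nhds (show d - ε < d by linarith))
      have hprob1 := hprob 1 one_pos
      have E2 : ∀ᶠ n in atTop,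
          (μ {ω | |Real.sqrt (K n) * (EL n - Lstar) / σh n ω - a| > 1}).toReal < ε := by
        have h2 : Tendsto (fun n =>
            (μ {ω | |Real.sqrt (K n) * (EL n - Lstar) / σh n ω - a| > 1}).toReal) atTop
            (𝓝 ((0:ℝ≥0∞).toReal)) :=
          (ENNReal.tendsto_toReal (by simp)).comp hprob1
        simp only [ENNReal.toReal_zero] at h2
        exact h2.eventually (eventually_lt_nhds hεpos)
      have E3 : ∀ᶠ n in atTop,
          Real.sqrt (K n) * (Lstar - 1/2) ≤ qα - M - a - 1 :=
        hc.eventually (eventually_le_atBot _)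
      filter_upwards [E1, E2, E3] with n h1 h2 h3
      -- set inclusion
      set S := {ω | Real.sqrt (K n) * (U n ω - 1/2) / σh n ω < qα} with hS
      set A := {ω | Real.sqrt (K n) * (U n ω - EL n) / σh n ω < M} with hA
      set B := {ω | |Real.sqrt (K n) * (EL n - Lstar) / σh n ω - a| > 1} with hB
      have hsub : A ∩ Bᶜ ⊆ S := by
        intro ω ⟨hωA, hωB⟩
        have hσ := hσpos n ω
        have hσ1 := hσbd n ω
        have hXω : Real.sqrt (K n) * (U n ω - EL n) / σh n ω < M := hωA
        have hYω : |Real.sqrt (K n) * (EL n - Lstar) / σh n ω - a| ≤ 1 := by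
          have : ¬ (|Real.sqrt (K n) * (EL n - Lstar) / σh n ω - a| > 1) := hωB
          linarith [not_lt.mp this]
        have hY : Real.sqrt (K n) * (EL n - Lstar) / σh n ω ≤ a + 1 := by
          have := abs_le.mp hYω
          linarith [this.2]
        have hznonpos : Real.sqrt (K n) * (Lstar - 1/2) ≤ 0 :=
          mul_nonpos_of_nonneg_of_nonpos (Real.sqrt_nonneg _) (by linarith)
        have hZ : Real.sqrt (K n) * (Lstar - 1/2) / σh n ω
            ≤ Real.sqrt (K n) * (Lstar - 1/2) := by
          rw [div_le_iff₀ hσ]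
          nlinarith
        have hdecomp : Real.sqrt (K n) * (U n ω - 1/2) / σh n ω
            = Real.sqrt (K n) * (U n ω - EL n) / σh n ω
              + Real.sqrt (K n) * (EL n - Lstar) / σh n ω
              + Real.sqrt (K n) * (Lstar - 1/2) / σh n ω := by
          rw [← add_div, ← add_div]
          congr 1
          ring
        show Real.sqrt (K n) * (U n ω - 1/2) / σh n ω < qα
        rw [hdecomp]
        linarith
      -- measure estimates
      have hAB : (μ A).toReal ≤ (μ (A ∩ Bᶜ)).toReal + (μ B).toReal := by
        have hsub2 : A ⊆ (A ∩ Bᶜ) ∪ B := by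
          intro ω hω
          by_cases hb : ω ∈ B
          · exact Or.inr hb
          · exact Or.inl ⟨hω, hb⟩
        have hle : μ A ≤ μ (A ∩ Bᶜ) + μ B :=
          le_trans (measure_mono hsub2) (measure_union_le _ _)
        exact ENNReal.toReal_le_add hle (measure_ne_top _ _) (measure_ne_top _ _)
      have hmono : (μ (A ∩ Bᶜ)).toReal ≤ (μ S).toReal :=
        ENNReal.toReal_mono (measure_ne_top _ _) (measure_mono hsub)
      have : d - ε < (μ A).toReal := h1
      have : (μ B).toReal < ε := h2
      show c < (μ S).toReal
      linarith
    · -- trivial upper bound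
      intro c hc1
      filter_upwards with n
      have h1 : (μ {ω | Real.sqrt (K n) * (U n ω - 1/2) / σh n ω < qα}).toReal
          ≤ (1 : ℝ≥0∞).toReal :=
        ENNReal.toReal_mono (by simp) prob_le_one
      simp only [ENNReal.toReal_one] at h1
      linarith
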